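/- Let $q$ be a prime and $d=q^r$ with $r\ge 1$. Let $G\le\mathrm{AGL}_1(q)\wr S_d$ contain an element $\sigma$ mapping to a $d$-cycle in $S_d$, set $G_q:=G\cap C_q^d$, and let $e$ be the rank of the elementary abelian group $G_q$. Then every Sylow $q$-subgroup of $G$ has nilpotency class at least $e$. -/

import Mathlib

/-- The homomorphism realizing the translation group `C_q^d` inside the wreath product
`AGL₁(q) ≀ S_d ≤ Sym(Fin d × ZMod q)`: the tuple `b` acts by `(i, x) ↦ (i, x + b i)`. -/
def blockTranslations (q d : ℕ) :
    Multiplicative (Fin d → ZMod q) →* Equiv.Perm (Fin d × ZMod q) :=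
  MonoidHom.mk'
    (fun b => Equiv.prodShear (Equiv.refl (Fin d))
      (fun i => Equiv.addRight (Multiplicative.toAdd b i)))
    (by
      intro a b
      ext ⟨i, x⟩
      · rfl
      · simp [Equiv.prodShear, add_comm, add_assoc, add_left_comm])

/-- An element of `Sym(Fin d × ZMod q)` lies in the wreath product `AGL₁(q) ≀ S_d` if it
acts by `(i, x) ↦ (π i, aᵢ·x + bᵢ)`. -/
def IsAGLWreath (q d : ℕ) (g : Equiv.Perm (Fin d × ZMod q)) : Prop :=
  ∃ (π : Equiv.Perm (Fin d)) (a : Fin d → (ZMod q)ˣ) (b : Fin d → ZMod q),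
    ∀ (i : Fin d) (x : ZMod q), g (i, x) = (π i, (a i : ZMod q) * x + b i)

namespace SylowAux

variable {q d : ℕ}

lemma bt_apply (c : Fin d → ZMod q) (i : Fin d) (x : ZMod q) :
    blockTranslations q d (Multiplicative.ofAdd c) (i, x) = (i, x + c i) := rfl

lemma bt_injective : Function.Injective (blockTranslations q d) := by
  intro c c' h
  apply Multiplicative.toAdd.injective
  funext i
  have := congrArg (fun g : Equiv.Perm (Fin d × ZMod q) => g (i, 0)) h
  have h2 : ((i, 0 + Multiplicative.toAdd c i) : Fin d × ZMod q)
      = (i, 0 + Multiplicative.toAdd c' i) := this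
  simpa using congrArg Prod.snd h2

def HasForm (g : Equiv.Perm (Fin d × ZMod q)) (π : Equiv.Perm (Fin d))
    (a : Fin d → (ZMod q)ˣ) (b : Fin d → ZMod q) : Prop :=
  ∀ i x, g (i, x) = (π i, (a i : ZMod q) * x + b i)

lemma HasForm.mul {g h : Equiv.Perm (Fin d × ZMod q)} {πg πh ag ah bg bh}
    (hg : HasForm g πg ag bg) (hh : HasForm h πh ah bh) :
    HasForm (g * h) (πg * πh) (fun i => ag (πh i) * ah i)
      (fun i => (ag (πh i) : ZMod q) * bh i + bg (πh i)) := by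
  intro i x
  have : (g * h) (i, x) = g (h (i, x)) := rfl
  rw [this, hh, hg]
  simp [mul_add, mul_assoc, add_assoc]

lemma HasForm.inv {g : Equiv.Perm (Fin d × ZMod q)} {πg ag bg}
    (hg : HasForm g πg ag bg) :
    HasForm g⁻¹ πg⁻¹ (fun i => (ag (πg⁻¹ i))⁻¹)
      (fun i => -((ag (πg⁻¹ i))⁻¹ : ZMod q) * bg (πg⁻¹ i)) := by
  intro i x
  rw [Equiv.Perm.inv_def, Equiv.symm_apply_eq, hg]
  have h1 : πg (πg⁻¹ i) = i := Equiv.apply_symm_apply πg i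
  ext
  · exact h1.symm ▸ rfl
  · simp only [h1]
    have hu : ((ag (πg⁻¹ i) : ZMod q)) * (((ag (πg⁻¹ i))⁻¹ : (ZMod q)ˣ) : ZMod q) = 1 :=
      Units.mul_inv _
    rw [ZMod.inv_coe_unit]
    linear_combination (bg (πg⁻¹ i) - x) * hu

lemma HasForm.pow {g : Equiv.Perm (Fin d × ZMod q)} {πg ag bg}
    (hg : HasForm g πg ag bg) (n : ℕ) :
    ∃ a' b', HasForm (g ^ n) (πg ^ n) a' b' := by
  induction n with
  | zero => exact ⟨1, 0, fun i x => by simp⟩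
  | succ n ih =>
      obtain ⟨a', b', h⟩ := ih
      exact ⟨_, _, by rw [pow_succ, pow_succ]; exact h.mul hg⟩

lemma HasForm.conj_bt {g : Equiv.Perm (Fin d × ZMod q)} {πg ag bg}
    (hg : HasForm g πg ag bg) (c : Fin d → ZMod q) :
    g * blockTranslations q d (Multiplicative.ofAdd c) * g⁻¹ =
      blockTranslations q d (Multiplicative.ofAdd
        (fun i => (ag (πg⁻¹ i) : ZMod q) * c (πg⁻¹ i))) := by
  rw [mul_inv_eq_iff_eq_mul]
  apply Equiv.ext
  rintro ⟨i, x⟩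
  show g ((blockTranslations q d (Multiplicative.ofAdd c)) (i,x)) =
    (blockTranslations q d (Multiplicative.ofAdd
      (fun i => (ag (πg⁻¹ i) : ZMod q) * c (πg⁻¹ i)))) (g (i,x))
  rw [bt_apply, hg, hg, bt_apply]
  simp [mul_add, add_assoc, add_comm]

end SylowAux

namespace SylowAux2
open SylowAux

variable {q d : ℕ}

/-- The "1 - twisted shift" operator. -/
def Lmap (ρ : Equiv.Perm (Fin d)) (α : Fin d → (ZMod q)ˣ) :
    (Fin d → ZMod q) →+ (Fin d → ZMod q) where
  toFun c := fun i => c i - (α (ρ⁻¹ i) : ZMod q) * c (ρ⁻¹ i)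
  map_zero' := by funext i; simp
  map_add' c c' := by funext i; simp; ring

lemma card_ker_Lmap_le (hq : q ≠ 0) (hd : 0 < d) (ρ : Equiv.Perm (Fin d))
    (α : Fin d → (ZMod q)ˣ)
    (htrans : ∀ i j : Fin d, ∃ k : ℕ, (ρ ^ k) i = j) :
    Nat.card ↥(Lmap ρ α).ker ≤ q := by
  haveI : NeZero q := ⟨hq⟩
  set i₀ : Fin d := ⟨0, hd⟩
  have hinj : Function.Injective (fun c : (Lmap ρ α).ker => (c : Fin d → ZMod q) i₀) := by
    rintro ⟨c, hc⟩ ⟨c', hc'⟩ h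
    simp only at h
    have key : ∀ (c : Fin d → ZMod q), c ∈ (Lmap ρ α).ker →
        ∀ j : Fin d, c (ρ j) = (α j : ZMod q) * c j := by
      intro c hc j
      have := congrFun (AddMonoidHom.mem_ker.mp hc) (ρ j)
      simp only [Lmap, AddMonoidHom.coe_mk, ZeroHom.coe_mk, Pi.zero_apply] at this
      rw [show ρ⁻¹ (ρ j) = j from Equiv.symm_apply_apply ρ j] at this
      linear_combination (norm := ring_nf) this
    have hk : ∀ k : ℕ, c ((ρ ^ k) i₀) = c' ((ρ ^ k) i₀) := by
      intro k
      induction k with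
      | zero => simpa using h
      | succ k ih =>
          have h1 : (ρ ^ (k+1)) i₀ = ρ ((ρ ^ k) i₀) := by
            rw [pow_succ']; rfl
          rw [h1, key c hc, key c' hc', ih]
    apply Subtype.ext
    funext j
    obtain ⟨k, hk'⟩ := htrans i₀ j
    rw [← hk']; exact hk k
  calc Nat.card ↥(Lmap ρ α).ker ≤ Nat.card (ZMod q) := Nat.card_le_card_of_injective _ hinj
    _ = q := Nat.card_zmod q

lemma card_le_card_map_mul_card_ker {M : Type*} [AddCommGroup M] [Finite M]
    (f : M →+ M) (W : AddSubgroup M) :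
    Nat.card W ≤ Nat.card (W.map f) * Nat.card f.ker := by
  set g : W →+ M := f.comp W.subtype
  have hrange : g.range = W.map f := by
    ext x
    simp [g, AddMonoidHom.mem_range, AddSubgroup.mem_map]
  have h1 : Nat.card W = Nat.card (W ⧸ g.ker) * Nat.card g.ker :=
    AddSubgroup.card_eq_card_quotient_mul_card_addSubgroup g.ker
  have h2 : Nat.card (W ⧸ g.ker) = Nat.card (W.map f) := by
    rw [← hrange]
    exact Nat.card_congr (QuotientAddGroup.quotientKerEquivRange g).toEquiv
  have h3 : Nat.card g.ker ≤ Nat.card f.ker := by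
    have hmem : ∀ x : g.ker, ((x : W) : M) ∈ f.ker := by
      intro x
      have := x.2
      simp only [AddMonoidHom.mem_ker, g, AddMonoidHom.comp_apply] at this
      exact AddMonoidHom.mem_ker.mpr this
    have hinj : Function.Injective (fun x : g.ker => ((x : W) : M)) := by
      intro x y hxy
      apply Subtype.ext; apply Subtype.ext; exact hxy
    apply Nat.card_le_card_of_injective (fun x => (⟨_, hmem x⟩ : f.ker))
    intro x y h
    simp only [Subtype.mk.injEq] at h
    exact hinj h
  calc Nat.card W = Nat.card (W.map f) * Nat.card g.ker := by rw [h1, h2]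
    _ ≤ Nat.card (W.map f) * Nat.card f.ker := Nat.mul_le_mul_left _ h3

end SylowAux2

open SylowAux SylowAux2 Subgroup Equiv Pointwise
open scoped commutatorElement


set_option maxHeartbeats 1000000 in
/-- Let `q` be prime, `d = q^r` (`r ≥ 1`), `G ≤ AGL₁(q) ≀ S_d` containing an element
mapping to a `d`-cycle on the blocks, and let `e` be the rank of the elementary abelian
group `G_q := G ∩ C_q^d` (so `|G_q| = q^e`).  Then every Sylow `q`-subgroup of `G` has
nilpotency class at least `e` (its lower central series does not reach the trivial group
before step `e`). -/
theorem sylow_nilpotency_class_ge_rank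
    (q r : ℕ) (hq : q.Prime) (hr : 1 ≤ r) (d : ℕ) (hd : d = q ^ r)
    (G : Subgroup (Equiv.Perm (Fin d × ZMod q)))
    (hG : ∀ g ∈ G, IsAGLWreath q d g)
    (σ : Equiv.Perm (Fin d × ZMod q)) (hσG : σ ∈ G)
    (π : Equiv.Perm (Fin d)) (a : Fin d → (ZMod q)ˣ) (b : Fin d → ZMod q)
    (hσform : ∀ (i : Fin d) (x : ZMod q), σ (i, x) = (π i, (a i : ZMod q) * x + b i))
    (hπ : π.IsCycle ∧ ∀ i : Fin d, π i ≠ i)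
    (e : ℕ) (he : Nat.card ↥((blockTranslations q d).range ⊓ G) = q ^ e) :
    ∀ Q : Sylow q ↥G, ∀ m : ℕ, m < e →
      (⊤ : Subgroup ↥(Q : Subgroup ↥G)).lowerCentralSeries m ≠ ⊥ := by
  haveI : Fact q.Prime := ⟨hq⟩
  haveI : NeZero q := ⟨hq.ne_zero⟩
  have hd2 : 0 < d := hd ▸ pow_pos hq.pos r
  set T := blockTranslations q d with hT
  -- the additive group of translations lying in G
  let U : AddSubgroup (Fin d → ZMod q) :=
    { carrier := {c | T (Multiplicative.ofAdd c) ∈ G}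
      add_mem' := fun {c} {c'} hc hc' => by
        have h : Multiplicative.ofAdd (c + c')
            = Multiplicative.ofAdd c * Multiplicative.ofAdd c' := rfl
        show T _ ∈ G
        rw [h, map_mul]
        exact mul_mem hc hc'
      zero_mem' := by
        show T _ ∈ G
        rw [show Multiplicative.ofAdd (0 : Fin d → ZMod q) = 1 from rfl, map_one]
        exact one_mem G
      neg_mem' := fun {c} hc => by
        have h : Multiplicative.ofAdd (-c) = (Multiplicative.ofAdd c)⁻¹ := rfl
        show T _ ∈ G
        rw [h, map_inv]
        exact inv_mem hc }
  have hUmemdef : ∀ c : Fin d → ZMod q, c ∈ U ↔ T (Multiplicative.ofAdd c) ∈ G :=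
    fun _ => Iff.rfl
  -- |U| = q ^ e
  have hcardU : Nat.card U = q ^ e := by
    rw [← he]
    apply Nat.card_congr
    refine Equiv.ofBijective
      (fun c => ⟨T (Multiplicative.ofAdd (c : Fin d → ZMod q)), ⟨⟨_, rfl⟩, c.2⟩⟩) ⟨?_, ?_⟩
    · intro x y hxy
      apply Subtype.ext
      have := bt_injective (Subtype.ext_iff.mp hxy)
      exact congrArg Multiplicative.toAdd this
    · rintro ⟨x, ⟨⟨bb, rfl⟩, hxG⟩⟩
      exact ⟨⟨Multiplicative.toAdd bb, hxG⟩, rfl⟩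
  -- V as a subgroup of G
  let VG : Subgroup ↥G := (T.range ⊓ G).subgroupOf G
  have hcardVG : Nat.card VG = q ^ e := by
    rw [← he]
    exact Nat.card_congr (Subgroup.subgroupOfEquivOfLe inf_le_right).toEquiv
  have hVGnormal : VG.Normal := by
    constructor
    rintro ⟨x, hxG⟩ hx ⟨g, hgG⟩
    rw [Subgroup.mem_subgroupOf] at hx ⊢
    rw [Subgroup.mem_inf] at hx ⊢
    obtain ⟨⟨bb, hbb⟩, hxG'⟩ := hx
    refine ⟨?_, SetLike.coe_mem _⟩
    obtain ⟨πg, ag, bg, hgform⟩ := hG g hgG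
    refine ⟨Multiplicative.ofAdd (fun i => (ag (πg⁻¹ i) : ZMod q)
        * (Multiplicative.toAdd bb) (πg⁻¹ i)), ?_⟩
    show T (Multiplicative.ofAdd (fun i => (ag (πg⁻¹ i) : ZMod q)
        * (Multiplicative.toAdd bb) (πg⁻¹ i))) = _
    rw [← HasForm.conj_bt hgform (Multiplicative.toAdd bb)]
    show g * T (Multiplicative.ofAdd (Multiplicative.toAdd bb)) * g⁻¹ = g * x * g⁻¹
    rw [show Multiplicative.ofAdd (Multiplicative.toAdd bb) = bb from rfl, hbb]
  haveI := hVGnormal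
  have hVGp : IsPGroup q VG := IsPGroup.of_card hcardVG
  -- the q-part of σ
  set N := orderOf σ with hN
  have hN0 : N ≠ 0 := (orderOf_pos σ).ne'
  set n : ℕ := ordCompl[q] N with hn
  set s : Equiv.Perm (Fin d × ZMod q) := σ ^ n with hs
  have hsG : s ∈ G := pow_mem hσG n
  have hords : orderOf s = q ^ (N.factorization q) := by
    rw [hs, orderOf_pow, ← hN, Nat.gcd_eq_right (Nat.ordCompl_dvd N q)]
    exact Nat.div_div_self (Nat.ordProj_dvd N q) hN0
  -- ⟨s⟩ generates a q-subgroup of G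
  set sG : ↥G := ⟨s, hsG⟩ with hsGdef
  have hordsG : orderOf sG = q ^ (N.factorization q) := by
    rw [← hords]
    exact (orderOf_injective G.subtype Subtype.coe_injective sG).symm
  have hZp : IsPGroup q (Subgroup.zpowers sG) :=
    IsPGroup.of_card (by rw [Nat.card_zpowers, hordsG])
  have hPp : IsPGroup q ((VG ⊔ Subgroup.zpowers sG : Subgroup ↥G)) :=
    IsPGroup.to_sup_of_normal_left hVGp hZp
  obtain ⟨Q₀, hQ₀⟩ := hPp.exists_le_sylow
  intro Q m hm
  obtain ⟨h, hh⟩ := MulAction.exists_smul_eq ↥G Q₀ Q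
  have hQcoe : (Q : Subgroup ↥G) = MulAut.conj h • (Q₀ : Subgroup ↥G) := by
    rw [← hh]; rfl
  have hVQ : VG ≤ (Q : Subgroup ↥G) := by
    rw [hQcoe]
    calc VG = MulAut.conj h • VG := (Subgroup.Normal.conj_smul_eq_self h VG).symm
      _ ≤ MulAut.conj h • (Q₀ : Subgroup ↥G) :=
        (Subgroup.pointwise_smul_le_pointwise_smul_iff).mpr (le_trans le_sup_left hQ₀)
  have hsQ₀ : sG ∈ (Q₀ : Subgroup ↥G) := hQ₀ (Subgroup.mem_sup_right (Subgroup.mem_zpowers sG))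
  set tG : ↥G := h * sG * h⁻¹ with htGdef
  have htQ : tG ∈ (Q : Subgroup ↥G) := by
    rw [hQcoe]
    have := Subgroup.smul_mem_pointwise_smul sG (MulAut.conj h) (Q₀ : Subgroup ↥G) hsQ₀
    simpa [MulAut.smul_def] using this
  set t : Equiv.Perm (Fin d × ZMod q) := (tG : Equiv.Perm (Fin d × ZMod q)) with htdef
  have htG' : t ∈ G := tG.2
  have htval : t = (h : Equiv.Perm (Fin d × ZMod q)) * s * (h : Equiv.Perm (Fin d × ZMod q))⁻¹ := rfl
  -- forms
  obtain ⟨w, aw, bw, hwform0⟩ := hG h.1 h.2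
  have hwform : HasForm (h : Equiv.Perm (Fin d × ZMod q)) w aw bw := hwform0
  have hσf : HasForm σ π a b := hσform
  obtain ⟨as, bs, hsform⟩ := hσf.pow n
  have hinvform := HasForm.inv hwform
  obtain ⟨α, β, htform⟩ :
      ∃ α' β', HasForm t (w * (π ^ n * w⁻¹)) α' β' :=
    ⟨_, _, by
      rw [htval, mul_assoc]
      exact hwform.mul (hsform.mul hinvform)⟩
  set ρ : Equiv.Perm (Fin d) := w * (π ^ n * w⁻¹) with hρdef
  -- transitivity of ρ
  have hsupp : π.support = Finset.univ := Finset.eq_univ_iff_forall.mpr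
      (fun i => Equiv.Perm.mem_support.mpr (hπ.2 i))
  have hordπ : orderOf π = d := by
    rw [hπ.1.orderOf, hsupp, Finset.card_univ, Fintype.card_fin]
  have hcopn : n.Coprime (orderOf π) := by
    rw [hordπ, hd]
    exact Nat.Coprime.pow_right r (Nat.coprime_ordCompl hq hN0).symm
  obtain ⟨mm, hmm⟩ := exists_pow_eq_self_of_coprime hcopn
  have htransπ : ∀ i j : Fin d, ∃ k : ℕ, (π ^ k) i = j := by
    intro i j
    obtain ⟨x, hx, hcyc⟩ := hπ.1
    have h1 : π.SameCycle i j := (hcyc (hπ.2 i)).symm.trans (hcyc (hπ.2 j))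
    obtain ⟨k, _, hk⟩ := h1.exists_pow_eq'
    exact ⟨k, hk⟩
  have htransρ : ∀ i j : Fin d, ∃ k : ℕ, (ρ ^ k) i = j := by
    intro i j
    obtain ⟨k, hk⟩ := htransπ (w⁻¹ i) (w⁻¹ j)
    refine ⟨mm * k, ?_⟩
    have hρ2 : ρ = w * (π ^ n) * w⁻¹ := (mul_assoc _ _ _).symm
    have h1 : ρ ^ (mm * k) = w * ((π ^ n) ^ (mm * k)) * w⁻¹ := by rw [hρ2, conj_pow]
    have h2 : (π ^ n) ^ (mm * k) = π ^ k := by rw [pow_mul, hmm]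
    rw [h1, h2]
    show w ((π ^ k) (w⁻¹ i)) = j
    rw [hk]
    exact Equiv.apply_symm_apply w j
  -- the commutator identity
  have hLc : ∀ c : Fin d → ZMod q,
      ⁅T (Multiplicative.ofAdd c), t⁆ = T (Multiplicative.ofAdd (Lmap ρ α c)) := by
    intro c
    have hinv : (T (Multiplicative.ofAdd c))⁻¹ = T (Multiplicative.ofAdd (-c)) := by
      rw [← map_inv]; rfl
    have hconj : t * T (Multiplicative.ofAdd (-c)) * t⁻¹
        = T (Multiplicative.ofAdd (fun i => (α (ρ⁻¹ i) : ZMod q) * (-c) (ρ⁻¹ i))) :=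
      htform.conj_bt (-c)
    have hcd : ⁅T (Multiplicative.ofAdd c), t⁆
        = T (Multiplicative.ofAdd c) * (t * (T (Multiplicative.ofAdd c))⁻¹ * t⁻¹) := by
      rw [commutatorElement_def]; group
    rw [hcd, hinv, hconj, ← map_mul]
    congr 1
    show Multiplicative.ofAdd (c + fun i => (α (ρ⁻¹ i) : ZMod q) * (-c) (ρ⁻¹ i)) = _
    congr 1
    funext i
    simp only [Lmap, AddMonoidHom.coe_mk, ZeroHom.coe_mk, Pi.add_apply, Pi.neg_apply]
    ring
  -- L preserves U
  have hLU : ∀ c ∈ U, Lmap ρ α c ∈ U := by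
    intro c hc
    rw [hUmemdef] at hc ⊢
    rw [← hLc c, commutatorElement_def]
    exact mul_mem (mul_mem (mul_mem hc htG') (inv_mem hc)) (inv_mem htG')
  -- iterated images
  let Um : ℕ → AddSubgroup (Fin d → ZMod q) :=
    fun k => Nat.rec U (fun _ W => W.map (Lmap ρ α)) k
  have hUm_succ : ∀ k, Um (k + 1) = (Um k).map (Lmap ρ α) := fun _ => rfl
  have hUmU : ∀ k, Um k ≤ U := by
    intro k
    induction k with
    | zero => exact le_rfl
    | succ k ih =>
        rw [hUm_succ]
        rintro c hc2
        obtain ⟨c₀, hc₀, rfl⟩ := AddSubgroup.mem_map.mp hc2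
        exact hLU c₀ (ih hc₀)
  have hcards : ∀ k, q ^ e ≤ Nat.card ↥(Um k) * q ^ k := by
    intro k
    induction k with
    | zero =>
        show q ^ e ≤ Nat.card U * q ^ 0
        simp [hcardU]
    | succ k ih =>
        calc q ^ e ≤ Nat.card ↥(Um k) * q ^ k := ih
          _ ≤ (Nat.card ↥((Um k).map (Lmap ρ α)) * Nat.card ↥(Lmap ρ α).ker) * q ^ k :=
              Nat.mul_le_mul_right _ (card_le_card_map_mul_card_ker _ _)
          _ ≤ (Nat.card ↥(Um (k + 1)) * q) * q ^ k := by
              rw [← hUm_succ]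
              exact Nat.mul_le_mul_right _ (Nat.mul_le_mul_left _
                (card_ker_Lmap_le hq.ne_zero hd2 ρ α htransρ))
          _ = Nat.card ↥(Um (k + 1)) * q ^ (k + 1) := by ring
  -- membership in Q for translations in U
  have hmemQ : ∀ (c : Fin d → ZMod q) (hc : c ∈ U),
      (⟨T (Multiplicative.ofAdd c), hc⟩ : ↥G) ∈ (Q : Subgroup ↥G) := by
    intro c hc
    apply hVQ
    rw [Subgroup.mem_subgroupOf]
    exact Subgroup.mem_inf.mpr ⟨⟨_, rfl⟩, hc⟩
  -- main induction : elements of Um k lie in the k-th lower central series term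
  have key : ∀ k (c : Fin d → ZMod q) (hc : c ∈ Um k),
      (⟨⟨T (Multiplicative.ofAdd c), hUmU k hc⟩, hmemQ c (hUmU k hc)⟩ : ↥(Q : Subgroup ↥G))
        ∈ (⊤ : Subgroup ↥(Q : Subgroup ↥G)).lowerCentralSeries k := by
    intro k
    induction k with
    | zero => intro c hc; exact Subgroup.mem_top _
    | succ k ih =>
        intro c hc
        obtain ⟨c₀, hc₀, hceq⟩ := AddSubgroup.mem_map.mp ((hUm_succ k) ▸ hc)
        rw [Subgroup.lowerCentralSeries_succ]
        have hX := ih c₀ hc₀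
        have hcm := Subgroup.commutator_mem_commutator hX
          (Subgroup.mem_top (⟨tG, htQ⟩ : ↥(Q : Subgroup ↥G)))
        have heq : ⁅(⟨⟨T (Multiplicative.ofAdd c₀), hUmU k hc₀⟩,
              hmemQ c₀ (hUmU k hc₀)⟩ : ↥(Q : Subgroup ↥G)),
            (⟨tG, htQ⟩ : ↥(Q : Subgroup ↥G))⁆
            = (⟨⟨T (Multiplicative.ofAdd c), hUmU (k+1) hc⟩,
                hmemQ c (hUmU (k+1) hc)⟩ : ↥(Q : Subgroup ↥G)) := by
          apply Subtype.ext; apply Subtype.ext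
          show ⁅T (Multiplicative.ofAdd c₀), t⁆ = T (Multiplicative.ofAdd c)
          rw [hLc c₀, hceq]
        rw [← heq]
        exact hcm
  -- conclusion
  intro hbot
  have hUm0 : ∀ c ∈ Um m, c = 0 := by
    intro c hc
    have hk := key m c hc
    rw [hbot, Subgroup.mem_bot] at hk
    have h1 : T (Multiplicative.ofAdd c) = 1 := by
      have h2 := Subtype.ext_iff.mp (Subtype.ext_iff.mp hk)
      simpa using h2
    have h3 : Multiplicative.ofAdd c = 1 := bt_injective (h1.trans (map_one T).symm)
    have h4 := congrArg Multiplicative.toAdd h3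
    simpa using h4
  have hUmbot : Um m = ⊥ := by
    rw [AddSubgroup.eq_bot_iff_forall]; exact hUm0
  have hcard1 : Nat.card ↥(Um m) = 1 := by
    rw [hUmbot]
    simp
  have hle := hcards m
  rw [hcard1, one_mul] at hle
  have : e ≤ m := (pow_le_pow_iff_right₀ hq.one_lt).mp hle
  omega
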